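/- arXiv:2604.27762 — 2 statements merged into one kernel-verified Lean document; each statement's English description precedes it below -/
import Mathlib

section
/- If φ(z)=(az+b)/(cz+d) is a linear fractional transformation with ad−bc≠0 mapping the unit disk into itself, then σ(z)=(ā z − c̄)/(−b̄ z + d̄) also maps the unit disk into itself. -/
lemma asd_det_aux (a b c d z : ℂ) (h1 : a * z + b = 0) (h2 : c * z + d = 0) :
    a * d - b * c = 0 := by
  have hz : z * (a * d - b * c) = 0 := by
    have : d * (a * z + b) - b * (c * z + d) = z * (a * d - b * c) := by ring
    rw [← this, h1, h2]; ring
  rcases mul_eq_zero.1 hz with hz0 | hdet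
  · subst hz0
    simp only [mul_zero, zero_add] at h1 h2
    subst h1; subst h2; ring
  · exact hdet

-- denominator nonvanishing on the open disk
lemma asd_keyA (a b c d : ℂ) (h : a * d - b * c ≠ 0)
    (hφ : ∀ z : ℂ, ‖z‖ < 1 → ‖(a * z + b) / (c * z + d)‖ < 1) :
    ∀ z : ℂ, ‖z‖ < 1 → c * z + d ≠ 0 := by
  intro z₀ hz₀ hden
  have hc : c ≠ 0 := by
    intro hc0
    rw [hc0, zero_mul, zero_add] at hden
    apply h; rw [hden, hc0]; ring
  by_cases hz00 : z₀ = 0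
  · -- then d = 0, b ≠ 0
    rw [hz00, mul_zero, zero_add] at hden
    have hb : b ≠ 0 := by
      intro hb0; apply h; rw [hb0, hden]; ring
    have hbpos : 0 < ‖b‖ := norm_pos_iff.2 hb
    set s : ℝ := min (1/2) (‖b‖ / (‖a‖ + ‖c‖ + 1)) with hs
    have hspos : 0 < s := lt_min (by norm_num) (by positivity)
    have hslt : ‖(s:ℂ)‖ < 1 := by
      rw [Complex.norm_real, Real.norm_eq_abs, abs_of_pos hspos]
      exact lt_of_le_of_lt (min_le_left _ _) (by norm_num)
    have hd2 : c * (s:ℂ) + d ≠ 0 := by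
      rw [hden, add_zero]
      exact mul_ne_zero hc (by exact_mod_cast ne_of_gt hspos)
    have := hφ (s:ℂ) hslt
    rw [norm_div, div_lt_one (norm_pos_iff.2 hd2)] at this
    rw [hden, add_zero] at this
    have h1 : ‖b‖ - ‖a‖ * s ≤ ‖a * (s:ℂ) + b‖ := by
      have : ‖b‖ ≤ ‖a * (s:ℂ) + b‖ + ‖a * (s:ℂ)‖ := by
        calc ‖b‖ = ‖(a * (s:ℂ) + b) - a * (s:ℂ)‖ := by ring_nf
          _ ≤ _ := norm_sub_le _ _
      have hna : ‖a * (s:ℂ)‖ = ‖a‖ * s := by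
        rw [norm_mul, Complex.norm_real, Real.norm_eq_abs, abs_of_pos hspos]
      linarith [this, hna.le]
    have h2 : ‖c * (s:ℂ)‖ = ‖c‖ * s := by
      rw [norm_mul, Complex.norm_real, Real.norm_eq_abs, abs_of_pos hspos]
    have h3 : s * (‖a‖ + ‖c‖) < ‖b‖ := by
      have hsle : s ≤ ‖b‖ / (‖a‖ + ‖c‖ + 1) := min_le_right _ _
      have h4 : 0 < ‖a‖ + ‖c‖ + 1 := by positivity
      rw [le_div_iff₀ h4] at hsle
      nlinarith [norm_nonneg a, norm_nonneg c]
    rw [h2] at this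
    nlinarith
  · -- z₀ ≠ 0
    have hnum : a * z₀ + b ≠ 0 := by
      intro h0; exact h (asd_det_aux a b c d z₀ h0 hden)
    set δ : ℝ := ‖a * z₀ + b‖ with hδ
    have hδpos : 0 < δ := norm_pos_iff.2 hnum
    set M : ℝ := (‖a‖ + ‖c‖) * ‖z₀‖ with hM
    have hMpos : 0 < M := by
      have : 0 < ‖z₀‖ := norm_pos_iff.2 hz00
      have : 0 < ‖c‖ := norm_pos_iff.2 hc
      positivity
    set t : ℝ := 1 - δ / (M + δ) with ht
    have hq1 : 0 < δ / (M + δ) := by positivity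
    have hq2 : δ / (M + δ) < 1 := by
      rw [div_lt_one (by positivity)]; linarith
    have htlt : t < 1 := by rw [ht]; linarith
    have htpos : 0 < t := by rw [ht]; linarith
    have hzt : ‖(t:ℂ) * z₀‖ < 1 := by
      rw [norm_mul, Complex.norm_real, Real.norm_eq_abs, abs_of_pos htpos]
      calc t * ‖z₀‖ < 1 * ‖z₀‖ := by
            exact mul_lt_mul_of_pos_right htlt (norm_pos_iff.2 hz00)
        _ ≤ 1 := by rw [one_mul]; exact hz₀.le
    have hdz : d = -(c * z₀) := by linear_combination hden
    have hden_t : c * ((t:ℂ) * z₀) + d = ((t:ℂ) - 1) * (c * z₀) := by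
      rw [hdz]; ring
    have ht1 : (t:ℂ) - 1 ≠ 0 := by
      intro h0
      have : (t:ℂ) = 1 := by linear_combination h0
      have : t = 1 := by exact_mod_cast this
      linarith
    have hden_t_ne : c * ((t:ℂ) * z₀) + d ≠ 0 := by
      rw [hden_t]; exact mul_ne_zero ht1 (mul_ne_zero hc hz00)
    have hφt := hφ _ hzt
    rw [norm_div, div_lt_one (norm_pos_iff.2 hden_t_ne)] at hφt
    have hnt1 : ‖(t:ℂ) - 1‖ = 1 - t := by
      have : (t:ℂ) - 1 = ((t - 1 : ℝ) : ℂ) := by push_cast; ring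
      rw [this, Complex.norm_real, Real.norm_eq_abs, abs_of_neg (by linarith)]
      ring
    have hdennorm : ‖c * ((t:ℂ) * z₀) + d‖ = (1 - t) * (‖c‖ * ‖z₀‖) := by
      rw [hden_t, norm_mul, hnt1, norm_mul]
    have hnumlb : δ - (1 - t) * (‖a‖ * ‖z₀‖) ≤ ‖a * ((t:ℂ) * z₀) + b‖ := by
      have heq : a * ((t:ℂ) * z₀) + b = (a * z₀ + b) + ((t:ℂ) - 1) * (a * z₀) := by
        ring
      have h5 : δ ≤ ‖a * ((t:ℂ) * z₀) + b‖ + ‖((t:ℂ) - 1) * (a * z₀)‖ := by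
        calc δ = ‖(a * ((t:ℂ) * z₀) + b) - ((t:ℂ) - 1) * (a * z₀)‖ := by
              rw [hδ]; congr 1; ring
          _ ≤ _ := norm_sub_le _ _
      have h6 : ‖((t:ℂ) - 1) * (a * z₀)‖ = (1 - t) * (‖a‖ * ‖z₀‖) := by
        rw [norm_mul, hnt1, norm_mul]
      linarith
    rw [hdennorm] at hφt
    have hfrac : (1 - t) * (M + δ) = δ := by
      rw [ht]; field_simp; ring
    nlinarith [hφt, hnumlb, hMpos, hδpos]

lemma asd_open (a b c d : ℂ) (h : a * d - b * c ≠ 0)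
    (hφ : ∀ z : ℂ, ‖z‖ < 1 → ‖(a * z + b) / (c * z + d)‖ < 1) :
    ∀ z : ℂ, ‖z‖ < 1 → ‖a * z + b‖ < ‖c * z + d‖ := by
  intro z hz
  have hd := asd_keyA a b c d h hφ z hz
  have := hφ z hz
  rwa [norm_div, div_lt_one (norm_pos_iff.2 hd)] at this

-- non-strict inequality on the closed disk

lemma asd_closed (a b c d : ℂ) (h : a * d - b * c ≠ 0)
    (hφ : ∀ z : ℂ, ‖z‖ < 1 → ‖(a * z + b) / (c * z + d)‖ < 1) :
    ∀ u : ℂ, ‖u‖ ≤ 1 → ‖a * u + b‖ ≤ ‖c * u + d‖ := by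
  intro u hu
  by_contra hcon
  push_neg at hcon
  set δ : ℝ := ‖a * u + b‖ - ‖c * u + d‖ with hδ
  have hδpos : 0 < δ := by rw [hδ]; linarith
  set t : ℝ := 1 - δ / (‖a‖ + ‖c‖ + 2*δ) with ht
  have hq1 : 0 < δ / (‖a‖ + ‖c‖ + 2*δ) := by positivity
  have hq2 : δ / (‖a‖ + ‖c‖ + 2*δ) < 1 := by
    rw [div_lt_one (by positivity)]
    nlinarith [norm_nonneg a, norm_nonneg c, hδpos]
  have htlt : t < 1 := by rw [ht]; linarith
  have htpos : 0 < t := by rw [ht]; linarith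
  have hzt : ‖(t:ℂ) * u‖ < 1 := by
    rw [norm_mul, Complex.norm_real, Real.norm_eq_abs, abs_of_pos htpos]
    calc t * ‖u‖ ≤ t * 1 := by
          exact mul_le_mul_of_nonneg_left hu htpos.le
      _ < 1 := by linarith
  have hstrict := asd_open a b c d h hφ _ hzt
  have hnt1 : ‖(t:ℂ) - 1‖ = 1 - t := by
    have : (t:ℂ) - 1 = ((t - 1 : ℝ) : ℂ) := by push_cast; ring
    rw [this, Complex.norm_real, Real.norm_eq_abs, abs_of_neg (by linarith)]
    ring
  have hulb : ‖a * u + b‖ - (1 - t) * ‖a‖ ≤ ‖a * ((t:ℂ) * u)+ b‖ := by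
    have h5 : ‖a * u + b‖ ≤ ‖a * ((t:ℂ) * u) + b‖ + ‖((t:ℂ) - 1) * (a * u)‖ := by
      calc ‖a * u + b‖ = ‖(a * ((t:ℂ) * u) + b) - ((t:ℂ) - 1) * (a * u)‖ := by
            congr 1; ring
        _ ≤ _ := norm_sub_le _ _
    have h6 : ‖((t:ℂ) - 1) * (a * u)‖ ≤ (1 - t) * ‖a‖ := by
      rw [norm_mul, hnt1, norm_mul]
      have : ‖a‖ * ‖u‖ ≤ ‖a‖ * 1 := mul_le_mul_of_nonneg_left hu (norm_nonneg a)
      nlinarith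
    linarith
  have hub : ‖c * ((t:ℂ) * u) + d‖ ≤ ‖c * u + d‖ + (1 - t) * ‖c‖ := by
    have h5 : ‖c * ((t:ℂ) * u) + d‖ ≤ ‖c * u + d‖ + ‖((t:ℂ) - 1) * (c * u)‖ := by
      calc ‖c * ((t:ℂ) * u) + d‖ = ‖(c * u + d) + ((t:ℂ) - 1) * (c * u)‖ := by
            congr 1; ring
        _ ≤ _ := norm_add_le _ _
    have h6 : ‖((t:ℂ) - 1) * (c * u)‖ ≤ (1 - t) * ‖c‖ := by
      rw [norm_mul, hnt1, norm_mul]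
      have : ‖c‖ * ‖u‖ ≤ ‖c‖ * 1 := mul_le_mul_of_nonneg_left hu (norm_nonneg c)
      nlinarith
    linarith
  have hfrac : (1 - t) * (‖a‖ + ‖c‖ + 2*δ) = δ := by
    rw [ht]; field_simp; ring
  nlinarith [hstrict, hulb, hub, hδpos, hfrac, htlt, htpos, norm_nonneg a, norm_nonneg c]

lemma asd_keyC (a b c d : ℂ) (h : a * d - b * c ≠ 0)
    (hφ : ∀ z : ℂ, ‖z‖ < 1 → ‖(a * z + b) / (c * z + d)‖ < 1) :
    ∀ w : ℂ, ‖w‖ < 1 → ‖a * w - c‖ < ‖d - b * w‖ := by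
  intro w hw
  by_cases hw0 : w = 0
  · -- need ‖c‖ < ‖d‖, from pole location
    subst hw0
    simp only [mul_zero, zero_sub, norm_neg, sub_zero]
    by_cases hc : c = 0
    · have hd : d ≠ 0 := by
        intro hd0; apply h; rw [hc, hd0]; ring
      rw [hc]; simpa using norm_pos_iff.2 hd
    ·
      by_contra hcon
      push_neg at hcon   -- ‖d‖ ≤ ‖c‖
      -- then z₀ = -d/c has ‖z₀‖ ≤ 1, and c * z₀ + d = 0, contradicting asd_closed
      set z₀ : ℂ := -d / c with hz₀
      have hzn : ‖z₀‖ ≤ 1 := by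
        rw [hz₀, norm_div, norm_neg, div_le_one (norm_pos_iff.2 hc)]
        exact hcon
      have hden : c * z₀ + d = 0 := by
        rw [hz₀]; field_simp; ring
      have hnum : a * z₀ + b ≠ 0 := by
        intro h0; exact h (asd_det_aux a b c d z₀ h0 hden)
      have := asd_closed a b c d h hφ z₀ hzn
      rw [hden, norm_zero] at this
      exact hnum (norm_eq_zero.1 (le_antisymm this (norm_nonneg _)))
  · set v : ℂ := w⁻¹ with hv
    have hwpos : 0 < ‖w‖ := norm_pos_iff.2 hw0
    have hvgt : 1 < ‖v‖ := by
      rw [hv, norm_inv]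
      exact (one_lt_inv₀ hwpos).2 hw
    have hkey : ‖a - c * v‖ < ‖d * v - b‖ := by
      by_cases hacv : a - c * v = 0
      · rw [hacv, norm_zero, norm_pos_iff]
        intro h0
        -- d * v = b and a = c * v ⟹ det = 0
        apply h
        have h1 : a = c * v := by linear_combination hacv
        have h2 : d * v = b := by linear_combination h0
        have : (a * d - b * c) = 0 := by
          have : a * d - b * c = c * v * d - d * v * c := by rw [h1, ← h2]
          rw [this]; ring
        exact this
      · set u : ℂ := (d * v - b) / (a - c * v) with hu
        have hcu : c * u + d = (a * d - b * c) / (a - c * v) := by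
          rw [hu]; field_simp; ring
        have hau : a * u + b = (a * d - b * c) * v / (a - c * v) := by
          rw [hu]; rw [mul_div_assoc', div_add' _ _ _ hacv]; congr 1; ring
        have hcune : c * u + d ≠ 0 := by
          rw [hcu]
          exact div_ne_zero h hacv
        have hugt : 1 < ‖u‖ := by
          by_contra hcon
          push_neg at hcon
          have hle := asd_closed a b c d h hφ u hcon
          have : ‖a * u + b‖ = ‖v‖ * ‖c * u + d‖ := by
            rw [hau, hcu]
            rw [norm_div, norm_div, norm_mul]
            ring
          rw [this] at hle
          have hpos : 0 < ‖c * u + d‖ := norm_pos_iff.2 hcune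
          nlinarith
        have : ‖a - c * v‖ < ‖d * v - b‖ := by
          have h1 : ‖u‖ = ‖d * v - b‖ / ‖a - c * v‖ := by
            rw [hu, norm_div]
          have h2 : 0 < ‖a - c * v‖ := norm_pos_iff.2 hacv
          rw [h1, lt_div_iff₀ h2, one_mul] at hugt
          exact hugt
        exact this
    -- translate back to w
    have e1 : d * v - b = (d - b * w) / w := by
      rw [hv]; field_simp
    have e2 : a - c * v = (a * w - c) / w := by
      rw [hv]; field_simp
    rw [e1, e2, norm_div, norm_div, div_lt_div_iff_of_pos_right hwpos] at hkey
    exact hkey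


theorem adjoint_symbol_maps_disk_to_disk (a b c d : ℂ) (h : a * d - b * c ≠ 0)
    (hφ : ∀ z : ℂ, ‖z‖ < 1 → ‖(a * z + b) / (c * z + d)‖ < 1) :
    ∀ z : ℂ, ‖z‖ < 1 →
      (-(starRingEnd ℂ b) * z + starRingEnd ℂ d ≠ 0 ∧
        ‖(starRingEnd ℂ a * z - starRingEnd ℂ c) /
            (-(starRingEnd ℂ b) * z + starRingEnd ℂ d)‖ < 1) := by
  intro z hz
  have hwz : ‖(starRingEnd ℂ) z‖ < 1 := by rwa [RCLike.norm_conj]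
  have hk := asd_keyC a b c d h hφ ((starRingEnd ℂ) z) hwz
  have eN : ‖starRingEnd ℂ a * z - starRingEnd ℂ c‖ = ‖a * (starRingEnd ℂ) z - c‖ := by
    rw [show starRingEnd ℂ a * z - starRingEnd ℂ c
        = starRingEnd ℂ (a * (starRingEnd ℂ) z - c) by
      simp [map_sub, map_mul], RCLike.norm_conj]
  have eD : ‖-(starRingEnd ℂ b) * z + starRingEnd ℂ d‖ = ‖d - b * (starRingEnd ℂ) z‖ := by
    rw [show -(starRingEnd ℂ b) * z + starRingEnd ℂ d
        = starRingEnd ℂ (d - b * (starRingEnd ℂ) z) by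
      simp [map_sub, map_mul]; ring, RCLike.norm_conj]
  have hDpos : 0 < ‖-(starRingEnd ℂ b) * z + starRingEnd ℂ d‖ := by
    rw [eD]
    exact lt_of_le_of_lt (norm_nonneg _) hk
  refine ⟨norm_pos_iff.1 hDpos, ?_⟩
  rw [norm_div, div_lt_one hDpos, eN, eD]
  exact hk
end

section
/- For 0<a<1, the symbol map of the n-th iterated Aluthge transform, ψ_n(z) = (−(1+a)((1−a)(1+a)^{n−1}−2^n a^n)z+(1−a)((1+a)^n+2^n a^n))/(−(1−a)((1+a)^n−2^n a^n)z+(1+a)((1−a)(1+a)^{n−1}+2^n a^n)), maps the open unit disk into itself for each n ≥ 1. -/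
theorem psi_n_maps_disk_to_disk (a : ℝ) (ha0 : 0 < a) (ha1 : a < 1) (n : ℕ) (hn : 1 ≤ n)
    (z : ℂ) (hz : ‖z‖ < 1) :
    (-(1 - (a : ℂ)) * ((1 + (a : ℂ)) ^ n - 2 ^ n * (a : ℂ) ^ n) * z
        + (1 + (a : ℂ)) * ((1 - (a : ℂ)) * (1 + (a : ℂ)) ^ (n - 1) + 2 ^ n * (a : ℂ) ^ n) ≠ 0) ∧
      ‖(-(1 + (a : ℂ)) * ((1 - (a : ℂ)) * (1 + (a : ℂ)) ^ (n - 1) - 2 ^ n * (a : ℂ) ^ n) * z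
          + (1 - (a : ℂ)) * ((1 + (a : ℂ)) ^ n + 2 ^ n * (a : ℂ) ^ n)) /
        (-(1 - (a : ℂ)) * ((1 + (a : ℂ)) ^ n - 2 ^ n * (a : ℂ) ^ n) * z
          + (1 + (a : ℂ)) * ((1 - (a : ℂ)) * (1 + (a : ℂ)) ^ (n - 1) + 2 ^ n * (a : ℂ) ^ n))‖ < 1 := by
  obtain ⟨m, rfl⟩ : ∃ m, n = m + 1 := ⟨n - 1, (Nat.succ_pred_eq_of_pos hn).symm⟩
  set P : ℝ := (1 + a) ^ m with hP
  set q : ℝ := 2 ^ (m + 1) * a ^ (m + 1) with hq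
  have hPpos : 0 < P := pow_pos (by linarith) m
  have hqpos : 0 < q := by positivity
  set A : ℝ := (1 + a) * ((1 - a) * P - q) with hA
  set B : ℝ := (1 - a) * ((1 + a) * P + q) with hB
  set C : ℝ := (1 - a) * ((1 + a) * P - q) with hC
  set D : ℝ := (1 + a) * ((1 - a) * P + q) with hD
  -- rewrite both expressions as real-coefficient affine maps
  have hden_eq : (-(1 - (a : ℂ)) * ((1 + (a : ℂ)) ^ (m + 1) - 2 ^ (m + 1) * (a : ℂ) ^ (m + 1)) * z
        + (1 + (a : ℂ)) * ((1 - (a : ℂ)) * (1 + (a : ℂ)) ^ (m + 1 - 1) + 2 ^ (m + 1) * (a : ℂ) ^ (m + 1)))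
      = -(C : ℂ) * z + (D : ℂ) := by
    simp only [Nat.add_sub_cancel, hC, hD, hP, hq]
    push_cast
    ring
  have hnum_eq : (-(1 + (a : ℂ)) * ((1 - (a : ℂ)) * (1 + (a : ℂ)) ^ (m + 1 - 1) - 2 ^ (m + 1) * (a : ℂ) ^ (m + 1)) * z
        + (1 - (a : ℂ)) * ((1 + (a : ℂ)) ^ (m + 1) + 2 ^ (m + 1) * (a : ℂ) ^ (m + 1)))
      = -(A : ℂ) * z + (B : ℂ) := by
    simp only [Nat.add_sub_cancel, hA, hB, hP, hq]
    push_cast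
    ring
  set s : ℝ := z.re with hs
  set t : ℝ := z.im with ht
  have hv : s ^ 2 + t ^ 2 < 1 := by
    have h1 : Complex.normSq z < 1 := by
      have := Complex.sq_norm z
      nlinarith [norm_nonneg z, hz, hz]
    simpa [Complex.normSq_apply, sq] using h1
  have hnsq : ∀ E F : ℝ, Complex.normSq (-(E : ℂ) * z + (F : ℂ))
      = E ^ 2 * (s ^ 2 + t ^ 2) - 2 * E * F * s + F ^ 2 := by
    intro E F
    simp [Complex.normSq_apply, Complex.add_re, Complex.add_im, Complex.mul_re,
      Complex.mul_im, ← hs, ← ht]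
    ring
  have key : A ^ 2 * (s ^ 2 + t ^ 2) - 2 * A * B * s + B ^ 2
      < C ^ 2 * (s ^ 2 + t ^ 2) - 2 * C * D * s + D ^ 2 := by
    have hid : C ^ 2 * (s ^ 2 + t ^ 2) - 2 * C * D * s + D ^ 2
        - (A ^ 2 * (s ^ 2 + t ^ 2) - 2 * A * B * s + B ^ 2)
        = 4 * a * q * ((1 - a ^ 2) * P * ((1 - s) ^ 2 + t ^ 2) + q * (1 - (s ^ 2 + t ^ 2))) := by
      simp only [hA, hB, hC, hD]; ring
    have ha2 : (0:ℝ) ≤ 1 - a ^ 2 := by nlinarith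
    have h1 : (0:ℝ) ≤ (1 - a ^ 2) * P * ((1 - s) ^ 2 + t ^ 2) :=
      mul_nonneg (mul_nonneg ha2 hPpos.le) (by positivity)
    have h2 : (0:ℝ) < q * (1 - (s ^ 2 + t ^ 2)) := by nlinarith
    have h3 : (0:ℝ) < 4 * a * q := by positivity
    linarith [mul_pos h3 (add_pos_of_nonneg_of_pos h1 h2)]
  have hlt : Complex.normSq (-(A : ℂ) * z + (B : ℂ)) < Complex.normSq (-(C : ℂ) * z + (D : ℂ)) := by
    rw [hnsq, hnsq]; exact key
  have hden_ne : -(C : ℂ) * z + (D : ℂ) ≠ 0 := by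
    intro h
    rw [h, Complex.normSq_zero] at hlt
    exact absurd hlt (not_lt.mpr (Complex.normSq_nonneg _))
  constructor
  · rw [hden_eq]; exact hden_ne
  · rw [hnum_eq, hden_eq, norm_div, div_lt_one (norm_pos_iff.mpr hden_ne)]
    rw [Complex.norm_def, Complex.norm_def]
    exact Real.sqrt_lt_sqrt (Complex.normSq_nonneg _) hlt
end
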